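/- arXiv:2510.09611 — 2 statements merged into one kernel-verified Lean document; each statement's English description precedes it below -/
import Mathlib

section
/- (Remark 3.2) Let d ≥ 1, r > 0, θ ∈ S^{d-1}, and define S_{r,θ} := {z ∈ B_r ∩ ℤ^d : z + sθ ∉ B_r ∩ ℤ^d for all s > 0}. Let W : ℤ^d → ℂ \ {0} satisfy W(y) = 1 for all y ∉ B_r ∩ ℤ^d. Then there exist w_1, w_2 : ℤ^d → ℂ \ {0} with w_1(z) = w_2(z) = 1 for all z ∉ B_r ∩ ℤ^d and w_2(z) = 1 for all z ∈ (B_r ∩ ℤ^d) \ S_{r,θ}, such that for every y ∈ ℤ^d: W(y) = w_2(y) · ∏_{ζ} w_1(ζ), where the (finite) product is over all ζ ∈ ℤ^d of the form ζ = y + sθ with s > 0. -/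
noncomputable section

/-- Embedding of the lattice `ℤ^d` into Euclidean `ℝ^d`. -/
def emb {d : ℕ} (z : Fin d → ℤ) : EuclideanSpace ℝ (Fin d) := WithLp.toLp 2 (fun i => (z i : ℝ))

lemma emb_add {d : ℕ} (a b : Fin d → ℤ) : emb (a + b) = emb a + emb b := by
  ext i; simp [emb]

lemma emb_sub {d : ℕ} (a b : Fin d → ℤ) : emb (a - b) = emb a - emb b := by
  ext i; simp [emb]

lemma emb_neg {d : ℕ} (a : Fin d → ℤ) : emb (-a) = -emb a := by
  ext i; simp [emb]

lemma emb_zsmul {d : ℕ} (k : ℤ) (a : Fin d → ℤ) : emb (k • a) = (k : ℝ) • emb a := by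
  ext i; simp [emb]

lemma emb_inj {d : ℕ} : Function.Injective (emb (d := d)) := by
  intro a b h
  funext i
  have : ((a i : ℝ)) = (b i : ℝ) := by
    have h' := congrArg (fun v : EuclideanSpace ℝ (Fin d) => v i) h; simpa [emb] using h'
  exact_mod_cast this

lemma coord_le_norm {d : ℕ} (x : EuclideanSpace ℝ (Fin d)) (i : Fin d) : ‖x i‖ ≤ ‖x‖ := by
  rw [EuclideanSpace.norm_eq]
  have h : ‖x i‖ ^ 2 ≤ ∑ j, ‖x j‖ ^ 2 :=
    Finset.single_le_sum (f := fun j => ‖x j‖ ^ 2) (fun j _ => by positivity) (Finset.mem_univ i)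
  calc ‖x i‖ = √(‖x i‖ ^ 2) := by rw [Real.sqrt_sq (norm_nonneg _)]
    _ ≤ _ := Real.sqrt_le_sqrt h

lemma one_le_norm_emb {d : ℕ} {z : Fin d → ℤ} (hz : z ≠ 0) : 1 ≤ ‖emb z‖ := by
  obtain ⟨i, hi⟩ : ∃ i, z i ≠ 0 := by
    by_contra h; push_neg at h; exact hz (funext h)
  have h1 : (1:ℝ) ≤ |(z i : ℝ)| := by
    rw [← Int.cast_abs]; exact_mod_cast Int.one_le_abs hi
  calc (1:ℝ) ≤ |(z i : ℝ)| := h1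
    _ = ‖(emb z) i‖ := by simp [emb]
    _ ≤ ‖emb z‖ := coord_le_norm _ i

lemma telescope (F : ℕ → ℂ) (h : ∀ i, F i ≠ 0) :
    ∀ n, ∏ i ∈ Finset.range n, (F i * (F (i+1))⁻¹) = F 0 * (F n)⁻¹
  | 0 => by simp [mul_inv_cancel₀ (h 0)]
  | n+1 => by
      rw [Finset.prod_range_succ, telescope F h n, mul_assoc, ← mul_assoc (F n)⁻¹,
        inv_mul_cancel₀ (h n), one_mul]

/-- Remark 3.2: any nonvanishing weight W equal to 1 outside B_r ∩ ℤ^d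
admits the presentation W(y) = w₂(y) ∏_{ζ = y + sθ, s > 0} w₁(ζ) with nonvanishing
w₁, w₂ equal to 1 outside B_r ∩ ℤ^d and w₂ ≡ 1 on (B_r ∩ ℤ^d) \ S_{r,θ}, where
S_{r,θ} = {z ∈ B_r ∩ ℤ^d : z + sθ ∉ B_r ∩ ℤ^d for all s > 0}. -/
theorem stmt11 (d : ℕ) (hd : 1 ≤ d) (r : ℝ) (hr : 0 < r)
    (θ : EuclideanSpace ℝ (Fin d)) (hθ : ‖θ‖ = 1)
    (W : (Fin d → ℤ) → ℂ) (hW : ∀ y, W y ≠ 0)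
    (hWs : ∀ y : Fin d → ℤ, ¬ ‖emb y‖ ≤ r → W y = 1) :
    ∃ w1 w2 : (Fin d → ℤ) → ℂ,
      (∀ z, w1 z ≠ 0) ∧ (∀ z, w2 z ≠ 0) ∧
      (∀ z : Fin d → ℤ, ¬ ‖emb z‖ ≤ r → w1 z = 1) ∧
      (∀ z : Fin d → ℤ, ¬ ‖emb z‖ ≤ r → w2 z = 1) ∧
      (∀ z : Fin d → ℤ, ‖emb z‖ ≤ r →
        ¬ (∀ s : ℝ, 0 < s → ¬ ∃ ζ : Fin d → ℤ, emb ζ = emb z + s • θ ∧ ‖emb ζ‖ ≤ r) →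
        w2 z = 1) ∧
      (∀ y : Fin d → ℤ,
        W y = w2 y * ∏ᶠ ζ ∈ {ζ : Fin d → ℤ | ∃ s : ℝ, 0 < s ∧ emb ζ = emb y + s • θ}, w1 ζ) := by
  have hθ0 : θ ≠ 0 := by
    intro h; rw [h, norm_zero] at hθ; exact one_ne_zero hθ.symm
  by_cases hG : ∃ t : ℝ, 0 < t ∧ ∃ z : Fin d → ℤ, emb z = t • θ
  swap
  · -- no positive lattice step in direction θ: all products are empty
    push_neg at hG
    refine ⟨fun _ => 1, W, fun _ => one_ne_zero, hW, fun _ _ => rfl, hWs, ?_, ?_⟩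
    · intro z hz hcon
      exfalso
      push_neg at hcon
      obtain ⟨s, hs, ζ, hζ, -⟩ := hcon
      exact hG s hs (ζ - z) (by rw [emb_sub, hζ]; abel)
    · intro y
      have hempty : {ζ : Fin d → ℤ | ∃ s : ℝ, 0 < s ∧ emb ζ = emb y + s • θ} = ∅ := by
        ext ζ
        simp only [Set.mem_setOf_eq, Set.mem_empty_iff_false, iff_false]
        rintro ⟨s, hs, hζ⟩
        exact hG s hs (ζ - y) (by rw [emb_sub, hζ]; abel)
      rw [hempty, finprod_mem_empty, mul_one]
  · -- there is a minimal positive step α with lattice point e, emb e = α • θ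
    obtain ⟨t₀, ht₀, z₀, hz₀⟩ := hG
    set Gc : Set ℝ := {t | ∃ z : Fin d → ℤ, emb z = t • θ} with hGc
    have Gzero : (0:ℝ) ∈ Gc := ⟨0, by rw [zero_smul]; ext i; simp [emb]⟩
    have Gadd : ∀ {a b : ℝ}, a ∈ Gc → b ∈ Gc → a + b ∈ Gc := by
      rintro a b ⟨za, ha⟩ ⟨zb, hb⟩
      exact ⟨za + zb, by rw [emb_add, ha, hb, add_smul]⟩
    have Gneg : ∀ {a : ℝ}, a ∈ Gc → -a ∈ Gc := by
      rintro a ⟨z, hz⟩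
      exact ⟨-z, by rw [emb_neg, hz, neg_smul]⟩
    set G : AddSubgroup ℝ := ⟨⟨⟨Gc, fun {a b} => Gadd⟩, Gzero⟩, fun {a} => Gneg⟩ with hGdef
    have hbot : G ≠ ⊥ := by
      intro h
      have : t₀ ∈ G := ⟨z₀, hz₀⟩
      rw [h, AddSubgroup.mem_bot] at this
      exact (ne_of_gt ht₀) this
    have hdisj : Disjoint (G : Set ℝ) (Set.Ioo 0 1) := by
      rw [Set.disjoint_left]
      rintro t ⟨z, hz⟩ ⟨ht0, ht1⟩
      have hz0 : z ≠ 0 := by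
        intro h
        rw [h] at hz
        have : emb (0 : Fin d → ℤ) = (0 : EuclideanSpace ℝ (Fin d)) := by ext i; simp [emb]
        rw [this] at hz
        exact hθ0 (by simpa [smul_eq_zero, ne_of_gt ht0] using hz.symm)
      have h1 : (1:ℝ) ≤ ‖emb z‖ := one_le_norm_emb hz0
      rw [hz, norm_smul, hθ, mul_one, Real.norm_eq_abs, abs_of_pos ht0] at h1
      linarith
    obtain ⟨α, ⟨hαG, hα⟩, hleast⟩ := AddSubgroup.exists_isLeast_pos hbot one_pos hdisj
    obtain ⟨e, he⟩ := hαG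
    -- every element of Gc is an integer multiple of α
    have hmul : ∀ t : ℝ, t ∈ Gc → ∃ k : ℤ, t = k * α := by
      intro t ht
      set k : ℤ := ⌊t / α⌋ with hk
      have h1 : (k:ℝ) * α ≤ t := by
        rw [← le_div_iff₀ hα]; exact Int.floor_le _
      have h2 : t < ((k:ℝ) + 1) * α := by
        rw [← div_lt_iff₀ hα, hk]; exact Int.lt_floor_add_one _
      have hmem : t - (k:ℝ) * α ∈ G := by
        have h3 : ((k:ℝ) * α) ∈ G := by
          have := AddSubgroup.zsmul_mem G ⟨e, he⟩ k
          simpa [zsmul_eq_mul] using this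
        exact AddSubgroup.sub_mem G ht h3
      rcases eq_or_lt_of_le (sub_nonneg.2 h1) with h | h
      · exact ⟨k, by linarith [h.symm]⟩
      · exfalso
        have := hleast ⟨hmem, h⟩
        have h4 : t - (k:ℝ)*α < α := by linarith
        linarith
    have hemb_ray : ∀ (y : Fin d → ℤ) (k : ℤ), emb (y + k • e) = emb y + ((k:ℝ) * α) • θ := by
      intro y k
      rw [emb_add, emb_zsmul, he, smul_smul]
    -- characterization of the ray set
    have hray : ∀ (y ζ : Fin d → ℤ),
        (∃ s : ℝ, 0 < s ∧ emb ζ = emb y + s • θ) ↔ ∃ k : ℤ, 1 ≤ k ∧ ζ = y + k • e := by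
      intro y ζ
      constructor
      · rintro ⟨s, hs, hζ⟩
        have hsG : s ∈ Gc := ⟨ζ - y, by rw [emb_sub, hζ]; abel⟩
        obtain ⟨k, hk⟩ := hmul s hsG
        have hk1 : 1 ≤ k := by
          rcases lt_or_ge k 1 with h | h
          · exfalso
            have : (k:ℝ) ≤ 0 := by exact_mod_cast Int.lt_add_one_iff.mp (by exact_mod_cast h)
            nlinarith
          · exact h
        refine ⟨k, hk1, ?_⟩
        have : emb ζ = emb (y + k • e) := by rw [hemb_ray, ← hk, hζ]
        exact emb_inj this
      · rintro ⟨k, hk1, rfl⟩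
        refine ⟨(k:ℝ) * α, by positivity, hemb_ray y k⟩
    -- growth along the ray
    have hgrow : ∀ (y : Fin d → ℤ) (k : ℤ), 0 ≤ k →
        (k:ℝ) * α - ‖emb y‖ ≤ ‖emb (y + k • e)‖ := by
      intro y k hk
      rw [hemb_ray]
      have h1 : ‖((k:ℝ) * α) • θ‖ - ‖emb y‖ ≤ ‖emb y + ((k:ℝ) * α) • θ‖ := by
        have := norm_add_le (emb y + ((k:ℝ)*α) • θ) (-(emb y))
        simp only [add_neg_cancel_comm, norm_neg] at this
        linarith
      rw [norm_smul, hθ, mul_one, Real.norm_eq_abs,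
        abs_of_nonneg (by positivity : (0:ℝ) ≤ (k:ℝ)*α)] at h1
      exact h1
    -- convexity: if y and y + k•e are in the ball with k ≥ 1, so is y + e
    have hconv : ∀ (y : Fin d → ℤ) (k : ℤ), 1 ≤ k → ‖emb y‖ ≤ r →
        ‖emb (y + k • e)‖ ≤ r → ‖emb (y + (1:ℤ) • e)‖ ≤ r := by
      intro y k hk hy hke
      set c : ℝ := ((k:ℝ))⁻¹ with hc
      have hkpos : (0:ℝ) < (k:ℝ) := by exact_mod_cast hk.trans_lt' (by norm_num)
      have hc0 : 0 < c := by positivity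
      have hc1 : c ≤ 1 := by
        rw [hc, inv_le_one_iff₀]; right; exact_mod_cast hk
      have hdecomp : emb (y + (1:ℤ) • e) = (1 - c) • emb y + c • emb (y + k • e) := by
        rw [hemb_ray, hemb_ray]
        have hcc : c * ((k:ℝ) * α) = α := by
          rw [hc]; field_simp
        rw [smul_add, smul_smul, hcc, Int.cast_one, one_mul]
        module
      rw [hdecomp]
      calc ‖(1 - c) • emb y + c • emb (y + k • e)‖
          ≤ ‖(1 - c) • emb y‖ + ‖c • emb (y + k • e)‖ := norm_add_le _ _
        _ = (1 - c) * ‖emb y‖ + c * ‖emb (y + k • e)‖ := by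
            rw [norm_smul, norm_smul, Real.norm_eq_abs, Real.norm_eq_abs,
              abs_of_nonneg (by linarith), abs_of_nonneg (le_of_lt hc0)]
        _ ≤ (1 - c) * r + c * r := by
            gcongr <;> linarith
        _ = r := by ring
    -- the weights
    set w1 : (Fin d → ℤ) → ℂ := fun z =>
      if ‖emb z‖ ≤ r then
        (if ‖emb (z - e)‖ ≤ r then W (z - e) else 1) *
        (if ‖emb (z + e)‖ ≤ r then W z else 1)⁻¹
      else 1 with hw1
    set w2 : (Fin d → ℤ) → ℂ := fun z => if ‖emb (z + e)‖ ≤ r then 1 else W z with hw2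
    have hw1ne : ∀ z, w1 z ≠ 0 := by
      intro z
      rw [hw1]
      dsimp only
      split
      · apply mul_ne_zero
        · split; exacts [hW _, one_ne_zero]
        · apply inv_ne_zero; split; exacts [hW _, one_ne_zero]
      · exact one_ne_zero
    have hw2ne : ∀ z, w2 z ≠ 0 := by
      intro z; rw [hw2]; dsimp only; split; exacts [one_ne_zero, hW _]
    refine ⟨w1, w2, hw1ne, hw2ne, ?_, ?_, ?_, ?_⟩
    · intro z hz; rw [hw1]; dsimp only; rw [if_neg hz]
    · intro z hz
      rw [hw2]; dsimp only
      split
      · rfl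
      · exact hWs z hz
    · intro z hz hcon
      push_neg at hcon
      obtain ⟨s, hs, ζ, hζeq, hζball⟩ := hcon
      obtain ⟨k, hk1, rfl⟩ := (hray z ζ).mp ⟨s, hs, hζeq⟩
      have := hconv z k hk1 hz hζball
      rw [one_smul] at this
      rw [hw2]; dsimp only
      rw [if_pos this]
    · intro y
      set N : ℕ := ⌈(r + ‖emb y‖) / α⌉₊ + 1 with hN
      have hNα : r + ‖emb y‖ < (N:ℝ) * α := by
        have h1 : (r + ‖emb y‖) / α ≤ (⌈(r + ‖emb y‖) / α⌉₊ : ℝ) := Nat.le_ceil _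
        have h2 : r + ‖emb y‖ ≤ (⌈(r + ‖emb y‖) / α⌉₊ : ℝ) * α := by
          rw [← div_le_iff₀ hα]; exact h1
        have h3 : ((⌈(r + ‖emb y‖) / α⌉₊ : ℝ)) * α < (N:ℝ) * α := by
          have : ((⌈(r + ‖emb y‖) / α⌉₊ : ℝ)) < (N:ℝ) := by rw [hN]; push_cast; linarith
          nlinarith
        linarith
      have hout : ∀ k : ℤ, (N:ℤ) ≤ k → ¬ ‖emb (y + k • e)‖ ≤ r := by
        intro k hk hle
        have h0k : (0:ℤ) ≤ k := le_trans (by positivity) hk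
        have h5 := hgrow y k h0k
        have hkN : (N:ℝ) ≤ (k:ℝ) := by exact_mod_cast hk
        nlinarith
      set F : ℕ → ℂ := fun i =>
        if ‖emb (y + (i:ℤ) • e)‖ ≤ r ∧ ‖emb (y + ((i:ℤ)+1) • e)‖ ≤ r
        then W (y + (i:ℤ) • e) else 1 with hF
      have hFne : ∀ i, F i ≠ 0 := by
        intro i; rw [hF]; dsimp only; split; exacts [hW _, one_ne_zero]
      have hstep : ∀ i : ℕ, w1 (y + ((i:ℤ)+1) • e) = F i * (F (i+1))⁻¹ := by
        intro i
        have hsub : (y + ((i:ℤ)+1) • e) - e = y + (i:ℤ) • e := by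
          funext j
          simp only [Pi.sub_apply, Pi.add_apply, Pi.smul_apply, smul_eq_mul]
          ring
        have hadd : (y + ((i:ℤ)+1) • e) + e = y + ((i:ℤ)+2) • e := by
          funext j
          simp only [Pi.add_apply, Pi.smul_apply, smul_eq_mul]
          ring
        have hcast : ((i+1:ℕ):ℤ) = (i:ℤ)+1 := by push_cast; ring
        rw [hw1, hF]
        dsimp only
        rw [hsub, hadd, hcast, show ((i:ℤ)+1) + 1 = (i:ℤ)+2 by ring]
        by_cases h1 : ‖emb (y + (i:ℤ) • e)‖ ≤ r <;>
          by_cases h2 : ‖emb (y + ((i:ℤ)+1) • e)‖ ≤ r <;>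
          by_cases h3 : ‖emb (y + ((i:ℤ)+2) • e)‖ ≤ r <;>
          simp only [h1, h2, h3, and_true, true_and, and_false, false_and, if_true, if_false,
            inv_one, mul_one, one_mul]
      have hinj : ∀ k l : ℤ, y + k • e = y + l • e → k = l := by
        intro k l h
        have h2 : emb (y + k • e) = emb (y + l • e) := by rw [h]
        rw [hemb_ray, hemb_ray] at h2
        have h3 : ((k:ℝ) * α) • θ = ((l:ℝ) * α) • θ := add_left_cancel h2
        have h4 : (k:ℝ) * α = (l:ℝ) * α := smul_left_injective ℝ hθ0 h3
        have h5 : (k:ℝ) = (l:ℝ) := mul_right_cancel₀ (ne_of_gt hα) h4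
        exact_mod_cast h5
      have hsupp1 : ∀ ζ, w1 ζ ≠ 1 → ‖emb ζ‖ ≤ r := by
        intro ζ h
        by_contra hc
        rw [hw1] at h; dsimp only at h
        rw [if_neg hc] at h
        exact h rfl
      have hSeq : {ζ : Fin d → ℤ | ∃ s : ℝ, 0 < s ∧ emb ζ = emb y + s • θ} ∩
          Function.mulSupport w1 =
          (((Finset.range N).image (fun i : ℕ => y + ((i:ℤ)+1) • e)) : Set (Fin d → ℤ)) ∩
          Function.mulSupport w1 := by
        ext ζ
        simp only [Set.mem_inter_iff, Set.mem_setOf_eq, Finset.coe_image, Set.mem_image,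
          Finset.mem_coe, Finset.mem_range, Function.mem_mulSupport]
        constructor
        · rintro ⟨hS, hsup⟩
          obtain ⟨k, hk1, rfl⟩ := (hray y _).mp hS
          have hball := hsupp1 _ hsup
          have hkN : k < (N:ℤ) := by
            by_contra hc; push_neg at hc; exact hout k hc hball
          refine ⟨⟨(k-1).toNat, by omega, ?_⟩, hsup⟩
          rw [show (((k-1).toNat : ℤ) + 1) = k by omega]
        · rintro ⟨⟨i, hiN, rfl⟩, hsup⟩
          exact ⟨(hray y _).mpr ⟨(i:ℤ)+1, by omega, rfl⟩, hsup⟩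
      have hprod : ∏ᶠ ζ ∈ {ζ : Fin d → ℤ | ∃ s : ℝ, 0 < s ∧ emb ζ = emb y + s • θ}, w1 ζ
          = F 0 * (F N)⁻¹ := by
        rw [finprod_mem_eq_prod_of_inter_mulSupport_eq w1 hSeq,
          Finset.prod_image (by
            intro i _ j _ h
            have := hinj _ _ h
            omega)]
        rw [Finset.prod_congr rfl fun i _ => hstep i]
        exact telescope F hFne N
      have hFN : F N = 1 := by
        rw [hF]; dsimp only
        rw [if_neg]
        rintro ⟨h1, -⟩
        exact hout N le_rfl h1
      have hF0 : F 0 = if ‖emb y‖ ≤ r ∧ ‖emb (y + e)‖ ≤ r then W y else 1 := by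
        rw [hF]; dsimp only
        norm_num [zero_smul, one_smul]
      rw [hprod, hFN, inv_one, mul_one, hF0, hw2]
      dsimp only
      by_cases hy : ‖emb y‖ ≤ r <;> by_cases hye : ‖emb (y + e)‖ ≤ r <;>
        simp [hy, hye, hWs y]
end
end

section
/- Let d ≥ 1, n ≥ 1, r > 0. Let f^dis : ℤ^d → M(n,ℂ) vanish outside B_r ∩ ℤ^d, and define the piecewise constant function f : ℝ^d → M(n,ℂ) by f(x) = f^dis(ζ) for x ∈ U_ζ := ζ + [−1/2, 1/2)^d, ζ ∈ ℤ^d. Let x_0 ∈ ℝ^d and θ ∈ S^{d-1}, and let γ = {x_0 + sθ : s ∈ ℝ}. For ζ ∈ ℤ^d let ℓ_ζ(γ) denote the one-dimensional Lebesgue measure of {s ∈ ℝ : x_0 + sθ ∈ U_ζ}. Then there exist R > 0 and a continuous function ψ : ℝ → M(n,ℂ) such that ψ is differentiable at all but finitely many s ∈ ℝ with derivative ψ'(s) = f(x_0 + sθ) · ψ(s), ψ(s) = I for all s ≤ −R, and for all s ≥ R, ψ(s) equals the ordered product of exp(ℓ_ζ(γ) f^dis(ζ)) over the finitely many ζ ∈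 B_r ∩ ℤ^d with ℓ_ζ(γ) > 0, multiplied so that the cube U_ζ that γ meets last (i.e. with the largest values of the parameter s) contributes the leftmost factor. -/
noncomputable section

open Matrix

/- Ordered product of `Φ` over `supp`: the factors are multiplied so that larger values
of `key` contribute factors further to the left (the value is `1` if no strictly
`key`-decreasing enumeration of `supp` by a list exists). -/
open Classical in
noncomputable def oprodBy {α G : Type*} [Monoid G] (Φ : α → G) (key : α → ℝ) (supp : Set α) : G :=
  if h : ∃ l : List α, l.Pairwise (fun a b => key b < key a) ∧ ∀ a, a ∈ l ↔ a ∈ supp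
  then (h.choose.map Φ).prod else 1

/-- The discrete non-abelian X-ray transform of `F` along the oriented line through `x`
with direction `θ`: the ordered product of `F y` over lattice points `y` on the line,
the point furthest along the orientation contributing the leftmost factor. -/
noncomputable def discS {d : ℕ} {G : Type*} [Monoid G] (F : (Fin d → ℤ) → G)
    (x θ : EuclideanSpace ℝ (Fin d)) : G :=
  oprodBy F (fun z => ∑ i, ((z i : ℝ) - x i) * θ i)
    {z | (∃ t : ℝ, emb z = x + t • θ) ∧ F z ≠ 1}
/-- The length ℓ_ζ(γ) of the intersection of the line s ↦ x₀ + sθ with the half-open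
unit cube U_ζ = ζ + [−1/2, 1/2)^d (note x ∈ U_ζ ↔ ∀ i, round (x i) = ζ i). -/
noncomputable def lenIn {d : ℕ} (x₀ θ : EuclideanSpace ℝ (Fin d)) (ζ : Fin d → ℤ) : ℝ :=
  (MeasureTheory.volume {s : ℝ | ∀ i, round (x₀ i + s * θ i) = ζ i}).toReal

/-- The entry time of the line s ↦ x₀ + sθ into the cube U_ζ. -/
noncomputable def entryT {d : ℕ} (x₀ θ : EuclideanSpace ℝ (Fin d)) (ζ : Fin d → ℤ) : ℝ :=
  sInf {s : ℝ | ∀ i, round (x₀ i + s * θ i) = ζ i}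

open Set MeasureTheory Filter


/-! ### sorted list existence -/

theorem exists_decList {α : Type*} (key : α → ℝ) (S : Finset α) :
    (∀ a ∈ S, ∀ b ∈ S, key a = key b → a = b) →
    ∃ l : List α, l.Pairwise (fun a b => key b < key a) ∧ ∀ a, a ∈ l ↔ a ∈ S := by
  classical
  induction S using Finset.strongInduction with
  | _ S ih =>
    intro hinj
    rcases S.eq_empty_or_nonempty with rfl | hS
    · exact ⟨[], by simp, by simp⟩
    · have hne : (S.image key).Nonempty := hS.image key
      obtain ⟨a, haS, hka⟩ := Finset.mem_image.mp ((S.image key).max'_mem hne)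
      obtain ⟨l, hl1, hl2⟩ := ih (S.erase a) (Finset.erase_ssubset haS)
        (fun x hx y hy h => hinj x (Finset.mem_of_mem_erase hx) y (Finset.mem_of_mem_erase hy) h)
      refine ⟨a :: l, List.pairwise_cons.mpr ⟨?_, hl1⟩, ?_⟩
      · intro b hb
        have hbe : b ∈ S.erase a := (hl2 b).mp hb
        have hbS : b ∈ S := Finset.mem_of_mem_erase hbe
        have hle : key b ≤ key a := by
          rw [hka]; exact Finset.le_max' _ _ (Finset.mem_image_of_mem key hbS)
        rcases lt_or_eq_of_le hle with h | h
        · exact h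
        · exact absurd (hinj b hbS a haS h) (Finset.ne_of_mem_erase hbe)
      · intro b
        simp only [List.mem_cons, hl2, Finset.mem_erase]
        constructor
        · rintro (rfl | ⟨_, h⟩) <;> [exact haS; exact h]
        · intro hbS
          rcases eq_or_ne b a with rfl | h
          · exact Or.inl rfl
          · exact Or.inr ⟨h, hbS⟩

/-! ### oprodBy uniqueness -/

theorem oprodBy_eq {α G : Type*} [Monoid G] (Φ : α → G) (key : α → ℝ) (supp : Set α)
    (l : List α) (h1 : l.Pairwise fun a b => key b < key a) (h2 : ∀ a, a ∈ l ↔ a ∈ supp) :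
    oprodBy Φ key supp = (l.map Φ).prod := by
  have h : ∃ l' : List α, l'.Pairwise (fun a b => key b < key a) ∧ ∀ a, a ∈ l' ↔ a ∈ supp :=
    ⟨l, h1, h2⟩
  rw [oprodBy, dif_pos h]
  obtain ⟨h1', h2'⟩ := h.choose_spec
  haveI : IsAntisymm α (fun a b => key b < key a) :=
    ⟨fun a b hab hba => absurd (hab.trans hba) (lt_irrefl _)⟩
  have hnd : ∀ (m : List α), m.Pairwise (fun a b => key b < key a) → m.Nodup := by
    intro m hm
    exact hm.imp (fun {a b} hab => fun h => by subst h; exact absurd hab (lt_irrefl _))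
  have hperm : List.Perm h.choose l := by
    rw [List.perm_ext_iff_of_nodup (hnd _ h1') (hnd _ h1)]
    intro a; rw [h2' a, h2 a]
  rw [List.Perm.eq_of_pairwise (fun a b _ _ hab hba => absurd (hab.trans hba) (lt_irrefl _)) h1' h1 hperm]

def lenAt (I : Set ℝ) (s : ℝ) : ℝ := (volume (I ∩ Set.Iic s)).toReal

section lenAt
variable {I : Set ℝ} {s u : ℝ}

theorem inter_Iic_fin (hfin : volume I ≠ ⊤) : volume (I ∩ Iic s) ≠ ⊤ :=
  fun h => hfin (eq_top_iff.mpr (h ▸ measure_mono inter_subset_left))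

theorem Ioc_fin : volume (Set.Ioc s u) ≠ ⊤ := by simp [Real.volume_Ioc]

theorem lenAt_add (hm : MeasurableSet I) (hfin : volume I ≠ ⊤) (h : s ≤ u) :
    lenAt I u = lenAt I s + (volume (I ∩ Set.Ioc s u)).toReal := by
  have hsplit : I ∩ Iic u = (I ∩ Iic s) ∪ (I ∩ Ioc s u) := by
    rw [← inter_union_distrib_left, Iic_union_Ioc_eq_Iic h]
  have hdisj : Disjoint (I ∩ Iic s) (I ∩ Ioc s u) := by
    refine Set.disjoint_left.mpr fun x hx hx' => ?_
    exact absurd (hx'.2.1.trans_le hx.2) (lt_irrefl s)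
  have hmeas : MeasurableSet (I ∩ Ioc s u) := hm.inter measurableSet_Ioc
  rw [lenAt, lenAt, hsplit, measure_union hdisj hmeas,
    ENNReal.toReal_add (inter_Iic_fin hfin)
      (fun h' => hfin (eq_top_iff.mpr (h' ▸ measure_mono inter_subset_left)))]

theorem vol_inter_Ioc_le : (volume (I ∩ Set.Ioc s u)).toReal ≤ u - s ∨ u < s := by
  rcases le_or_gt s u with h | h
  · left
    calc (volume (I ∩ Set.Ioc s u)).toReal ≤ (volume (Set.Ioc s u)).toReal := by
          apply ENNReal.toReal_mono Ioc_fin (measure_mono inter_subset_right)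
      _ = u - s := by rw [Real.volume_Ioc, ENNReal.toReal_ofReal (by linarith)]
  · right; exact h

theorem lenAt_lipschitz (hm : MeasurableSet I) (hfin : volume I ≠ ⊤) :
    LipschitzWith 1 (lenAt I) := by
  apply LipschitzWith.of_dist_le_mul
  have key : ∀ a b : ℝ, a ≤ b → dist (lenAt I b) (lenAt I a) ≤ 1 * dist b a := by
    intro a b hab
    rw [lenAt_add hm hfin hab, Real.dist_eq, Real.dist_eq, one_mul]
    have h1 : (volume (I ∩ Set.Ioc a b)).toReal ≤ b - a := by
      rcases (vol_inter_Ioc_le (I := I) (s := a) (u := b)) with h | h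
      · exact h
      · linarith
    have h2 : (0:ℝ) ≤ (volume (I ∩ Set.Ioc a b)).toReal := ENNReal.toReal_nonneg
    rw [add_sub_cancel_left, abs_of_nonneg h2, abs_of_nonneg (by linarith)]
    exact h1
  intro a b
  rcases le_total a b with h | h
  · rw [dist_comm (lenAt I a), dist_comm a]; exact key a b h
  · exact key b a h

theorem lenAt_continuous (hm : MeasurableSet I) (hfin : volume I ≠ ⊤) :
    Continuous (lenAt I) := (lenAt_lipschitz hm hfin).continuous

theorem lenAt_eq_zero (h : ∀ x ∈ I, s < x) : lenAt I s = 0 := by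
  have : I ∩ Iic s = ∅ := by
    ext x; simp only [mem_inter_iff, mem_Iic, mem_empty_iff_false, iff_false, not_and, not_le]
    exact fun hx => h x hx
  rw [lenAt, this, measure_empty, ENNReal.toReal_zero]

theorem lenAt_eq_tot (h : I ⊆ Iic s) : lenAt I s = (volume I).toReal := by
  rw [lenAt, inter_eq_self_of_subset_left h]

theorem lenAt_eventually_const (hm : MeasurableSet I) (hfin : volume I ≠ ⊤)
    (h : s ∉ closure I) : lenAt I =ᶠ[nhds s] fun _ => lenAt I s := by
  obtain ⟨ε, hε, hball⟩ := Metric.mem_nhds_iff.mp (isOpen_compl_iff.mpr isClosed_closure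
    |>.mem_nhds h)
  filter_upwards [Metric.ball_mem_nhds s hε] with u hu
  have hsub : ∀ a b : ℝ, s - ε < a → b < s + ε → I ∩ Set.Ioc a b = ∅ := by
    intro a b ha hb
    ext x
    simp only [mem_inter_iff, mem_Ioc, mem_empty_iff_false, iff_false, not_and, and_imp]
    intro hxI hax hxb
    have : x ∈ Metric.ball s ε := by
      rw [Real.ball_eq_Ioo]; exact ⟨ha.trans_le hax.le, lt_of_le_of_lt hxb hb⟩
    exact absurd (subset_closure hxI) (hball this)
  rw [Real.ball_eq_Ioo] at hu
  rcases le_total s u with h' | h'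
  · rw [lenAt_add hm hfin h', hsub s u (by linarith) hu.2, measure_empty,
      ENNReal.toReal_zero, add_zero]
  · rw [show lenAt I s = lenAt I u + (volume (I ∩ Set.Ioc u s)).toReal from
      lenAt_add hm hfin h', hsub u s hu.1 (by linarith), measure_empty,
      ENNReal.toReal_zero, add_zero]

theorem hasDerivAt_lenAt (hm : MeasurableSet I) (hfin : volume I ≠ ⊤)
    {ε : ℝ} (hε : 0 < ε) (h : Ioo (s - ε) (s + ε) ⊆ I) :
    HasDerivAt (lenAt I) 1 s := by
  have hlin : HasDerivAt (fun u => lenAt I s + (u - s)) 1 s := by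
    simpa using ((hasDerivAt_id s).sub_const s).const_add (lenAt I s)
  apply hlin.congr_of_eventuallyEq
  filter_upwards [Metric.ball_mem_nhds s hε] with u hu
  rw [Real.ball_eq_Ioo] at hu
  have key : ∀ a b : ℝ, a ≤ b → s - ε < a → b < s + ε → I ∩ Set.Ioc a b = Set.Ioc a b := by
    intro a b hab ha hb
    refine inter_eq_self_of_subset_right fun x hx => h ⟨?_, ?_⟩
    · exact ha.trans_le hx.1.le
    · exact lt_of_le_of_lt hx.2 hb
  rcases le_total s u with h' | h'
  · rw [lenAt_add hm hfin h', key s u h' (by linarith) hu.2, Real.volume_Ioc,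
      ENNReal.toReal_ofReal (by linarith)]
  · have := lenAt_add hm hfin h' (u := s) (s := u)
    rw [this, key u s h' hu.1 (by linarith), Real.volume_Ioc,
      ENNReal.toReal_ofReal (by linarith)]
    ring

end lenAt

theorem ordConn_all_lt {I J : Set ℝ} (hI : I.OrdConnected) (hJ : J.OrdConnected)
    (hd : ∀ x, x ∈ I → x ∈ J → False) :
    (∀ p ∈ I, ∀ q ∈ J, p < q) ∨ (∀ p ∈ J, ∀ q ∈ I, p < q) := by
  by_contra hcon
  push_neg at hcon
  obtain ⟨⟨p, hp, q, hq, hqp⟩, ⟨q', hq', p', hp', hpq'⟩⟩ := hcon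
  rcases le_total q p' with h | h
  · exact hd p' (hp') (hJ.out hq hq' ⟨h, hpq'⟩)
  · exact hd q (hI.out hp' hp ⟨h, hqp⟩) hq

theorem Ioo_inf_sup_subset {I : Set ℝ} (h : I.OrdConnected) (hne : I.Nonempty)
    (hbb : BddBelow I) (hba : BddAbove I) : Ioo (sInf I) (sSup I) ⊆ I := by
  intro x hx
  obtain ⟨p, hp, hpx⟩ := (csInf_lt_iff hbb hne).mp hx.1
  obtain ⟨q, hq, hxq⟩ := (lt_csSup_iff hba hne).mp hx.2
  exact h.out hp hq ⟨hpx.le, hxq.le⟩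

theorem subset_Icc_inf_sup {I : Set ℝ} (hbb : BddBelow I) (hba : BddAbove I) :
    I ⊆ Icc (sInf I) (sSup I) := fun x hx => ⟨csInf_le hbb hx, le_csSup hba hx⟩

/-- if `s` is in the closure of a bounded ordConnected set and is not an endpoint,
it is in the set. -/
theorem mem_of_mem_closure {I : Set ℝ} (h : I.OrdConnected) (hne : I.Nonempty)
    (hbb : BddBelow I) (hba : BddAbove I) {s : ℝ}
    (hs : s ∈ closure I) (h1 : s ≠ sInf I) (h2 : s ≠ sSup I) : s ∈ I := by
  have hIcc : s ∈ Icc (sInf I) (sSup I) :=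
    closure_minimal (subset_Icc_inf_sup hbb hba) isClosed_Icc hs
  exact Ioo_inf_sup_subset h hne hbb hba
    ⟨lt_of_le_of_ne hIcc.1 (Ne.symm h1), lt_of_le_of_ne hIcc.2 h2⟩

/-- a point of a bounded ordConnected null set equals its `sInf`. -/
theorem eq_sInf_of_null {I : Set ℝ} (h : I.OrdConnected)
    (hbb : BddBelow I) (hba : BddAbove I) {s : ℝ} (hs : s ∈ I)
    (hnull : volume I = 0) : s = sInf I := by
  have hne : I.Nonempty := ⟨s, hs⟩
  have hsub := Ioo_inf_sup_subset h hne hbb hba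
  have hle : volume (Ioo (sInf I) (sSup I)) = 0 :=
    le_antisymm (hnull ▸ measure_mono hsub) zero_le
  rw [Real.volume_Ioo] at hle
  have hss : sSup I ≤ sInf I := by
    by_contra hc
    push_neg at hc
    rw [ENNReal.ofReal_eq_zero] at hle
    linarith
  have := subset_Icc_inf_sup hbb hba hs
  exact le_antisymm (this.2.trans hss) this.1 |>.symm ▸ rfl

/-- a positive-measure set has a point strictly above its `sInf`. -/
theorem exists_gt_sInf_of_pos {I : Set ℝ} (hbb : BddBelow I)
    (hpos : volume I ≠ 0) : ∃ p ∈ I, sInf I < p := by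
  have hne : I.Nonempty := nonempty_of_measure_ne_zero hpos
  by_contra hc
  push_neg at hc
  have hsub : I ⊆ {sInf I} := fun x hx =>
    le_antisymm (hc x hx) (csInf_le hbb hx)
  exact hpos (le_antisymm ((measure_mono hsub).trans (by simp)) zero_le)

/-! ### eventually over a list -/

theorem eventually_list {β : Type*} {l : List β} {x : ℝ} {P : β → ℝ → Prop}
    (h : ∀ b ∈ l, ∀ᶠ u in nhds x, P b u) : ∀ᶠ u in nhds x, ∀ b ∈ l, P b u := by
  induction l with
  | nil => simp
  | cons a t ih =>
    have ha := h a (by simp)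
    have ht := ih (fun b hb => h b (by simp [hb]))
    filter_upwards [ha, ht] with u h1 h2
    intro b hb
    rcases List.mem_cons.mp hb with rfl | hb
    · exact h1
    · exact h2 b hb

/-! ### the main abstract lemma -/

theorem aux_main {𝔸 : Type*} [NormedRing 𝔸] [NormedAlgebra ℂ 𝔸] [CompleteSpace 𝔸]
    {α : Type*} (A : α → 𝔸) (z : ℝ → α) (F : Set α) (hF : F.Finite)
    (hconn : ∀ ζ : α, Set.OrdConnected (z ⁻¹' {ζ}))
    (R : ℝ)
    (hsupp : ∀ s, A (z s) ≠ 0 → z s ∈ F)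
    (hbdd : ∀ ζ ∈ F, z ⁻¹' {ζ} ⊆ Set.Ioo (-R) R) :
    ∃ ψ : ℝ → 𝔸, Continuous ψ ∧
      (∃ E : Set ℝ, E.Finite ∧ ∀ s ∉ E, HasDerivAt ψ (A (z s) * ψ s) s) ∧
      (∀ s ≤ -R, ψ s = 1) ∧
      (∀ s ≥ R, ψ s = oprodBy (fun ζ => NormedSpace.exp
          ((((volume (z ⁻¹' {ζ})).toReal : ℝ) : ℂ) • A ζ))
        (fun ζ => sInf (z ⁻¹' {ζ}))
        {ζ | ζ ∈ F ∧ 0 < (volume (z ⁻¹' {ζ})).toReal}) := by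
  classical
  set I : α → Set ℝ := fun ζ => z ⁻¹' {ζ} with hIdef
  have hmeas : ∀ ζ, MeasurableSet (I ζ) := fun ζ => (hconn ζ).measurableSet
  have hdisjf : ∀ {a b : α}, a ≠ b → ∀ x, x ∈ I a → x ∈ I b → False := by
    intro a b hab x hxa hxb
    exact hab ((mem_singleton_iff.mp hxa).symm.trans (mem_singleton_iff.mp hxb))
  have hself : ∀ s, s ∈ I (z s) := fun s => rfl
  have hfinvol : ∀ ζ ∈ F, volume (I ζ) ≠ ⊤ := by
    intro ζ hζ
    have hlt : volume (I ζ) < ⊤ :=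
      lt_of_le_of_lt (measure_mono (hbdd ζ hζ)) (by rw [Real.volume_Ioo]; exact ENNReal.ofReal_lt_top)
    exact hlt.ne
  have hbb : ∀ ζ ∈ F, BddBelow (I ζ) := fun ζ hζ => ⟨-R, fun x hx => ((hbdd ζ hζ) hx).1.le⟩
  have hba : ∀ ζ ∈ F, BddAbove (I ζ) := fun ζ hζ => ⟨R, fun x hx => ((hbdd ζ hζ) hx).2.le⟩
  set key : α → ℝ := fun ζ => sInf (I ζ) with hkeydef
  set supp : Set α := {ζ | ζ ∈ F ∧ 0 < (volume (I ζ)).toReal} with hsuppdef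
  have hsuppF : supp ⊆ F := fun ζ h => h.1
  have hsfin : supp.Finite := hF.subset hsuppF
  have hvolne : ∀ ζ ∈ supp, volume (I ζ) ≠ 0 := by
    intro ζ hζ h0
    have h2 := hζ.2
    rw [h0] at h2; simp at h2
  have hkeyinj : ∀ a ∈ hsfin.toFinset, ∀ b ∈ hsfin.toFinset, key a = key b → a = b := by
    intro a ha b hb heq
    rw [Set.Finite.mem_toFinset] at ha hb
    by_contra hab
    obtain ⟨pa, hpa, hpa'⟩ := exists_gt_sInf_of_pos (hbb a (hsuppF ha)) (hvolne a ha)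
    obtain ⟨pb, hpb, hpb'⟩ := exists_gt_sInf_of_pos (hbb b (hsuppF hb)) (hvolne b hb)
    have hnea : (I a).Nonempty := ⟨pa, hpa⟩
    have hneb : (I b).Nonempty := ⟨pb, hpb⟩
    rcases ordConn_all_lt (hconn a) (hconn b) (fun x hx hx' => hdisjf hab x hx hx') with hc | hc
    · -- I a entirely left of I b ; then key a < key b
      have h1 : pa ≤ key b := le_csInf hneb (fun q hq => (hc pa hpa q hq).le)
      exact absurd heq (by have := hpa'.trans_le h1; exact ne_of_lt this)
    · have h1 : pb ≤ key a := le_csInf hnea (fun q hq => (hc pb hpb q hq).le)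
      exact absurd heq.symm (by have := hpb'.trans_le h1; exact ne_of_lt this)
  obtain ⟨L, hL1, hL2'⟩ := exists_decList key hsfin.toFinset hkeyinj
  have hL2 : ∀ a, a ∈ L ↔ a ∈ supp := by
    intro a; rw [hL2' a, Set.Finite.mem_toFinset]
  have hLF : ∀ ζ ∈ L, ζ ∈ F := fun ζ h => ((hL2 ζ).mp h).1
  -- the exceptional set
  set E : Set ℝ := ⋃ ζ ∈ F, ({sInf (I ζ), sSup (I ζ)} : Set ℝ) with hEdef
  have hEfin : E.Finite := hF.biUnion (fun ζ _ => (Set.finite_singleton _).insert _)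
  have hEP : ∀ {s : ℝ} {ζ : α}, ζ ∈ F → s ∉ E → s ≠ sInf (I ζ) ∧ s ≠ sSup (I ζ) := by
    intro s ζ hζ hs
    constructor <;> intro h <;> exact hs (Set.mem_biUnion hζ (by simp [h]))
  -- the solution
  set f : α → ℝ → 𝔸 := fun ζ u => NormedSpace.exp (((lenAt (I ζ) u : ℝ) : ℂ) • A ζ)
    with hfdef
  set ψ : ℝ → 𝔸 := fun u => (L.map (fun ζ => f ζ u)).prod with hψdef
  -- `s ∉ closure (I ζ)` for `ζ ∈ F` with `s ∉ I ζ` not an endpoint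
  have hclosure : ∀ {s : ℝ} {ζ : α}, ζ ∈ F → s ∉ E → s ∉ I ζ → s ∉ closure (I ζ) := by
    intro s ζ hζ hsE hsI hcl
    have hne' : (I ζ).Nonempty := by
      rcases (I ζ).eq_empty_or_nonempty with h | h
      · rw [h, closure_empty] at hcl; exact absurd hcl (notMem_empty s)
      · exact h
    exact hsI (mem_of_mem_closure (hconn ζ) hne' (hbb ζ hζ) (hba ζ hζ) hcl
      (hEP hζ hsE).1 (hEP hζ hsE).2)
  refine ⟨ψ, ?_, ⟨E, hEfin, ?_⟩, ?_, ?_⟩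
  · -- continuity
    apply continuous_list_prod
    intro ζ hζ
    have h1 : Continuous (lenAt (I ζ)) :=
      lenAt_continuous (hmeas ζ) (hfinvol ζ (hLF ζ hζ))
    letI : NormedAlgebra ℚ 𝔸 := NormedAlgebra.restrictScalars ℚ ℂ 𝔸
    exact NormedSpace.exp_continuous.comp ((Complex.continuous_ofReal.comp h1).smul
      continuous_const)
  · -- derivative
    intro s hs
    by_cases hL : z s ∈ L
    · -- main case
      set ζ₀ := z s with hζ₀
      have hsupp₀ : ζ₀ ∈ supp := (hL2 ζ₀).mp hL
      have hF₀ : ζ₀ ∈ F := hsupp₀.1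
      have hfin₀ := hfinvol ζ₀ hF₀
      have hsI : s ∈ I ζ₀ := hself s
      have hnend := hEP hF₀ hs
      have h1 : sInf (I ζ₀) < s := lt_of_le_of_ne (csInf_le (hbb ζ₀ hF₀) hsI) (Ne.symm hnend.1)
      have h2 : s < sSup (I ζ₀) := lt_of_le_of_ne (le_csSup (hba ζ₀ hF₀) hsI) hnend.2
      set ε := min (s - sInf (I ζ₀)) (sSup (I ζ₀) - s) with hεdef
      have hε : 0 < ε := lt_min (by linarith) (by linarith)
      have hIoo : Set.Ioo (s - ε) (s + ε) ⊆ I ζ₀ := by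
        intro x hx
        apply Ioo_inf_sup_subset (hconn ζ₀) ⟨s, hsI⟩ (hbb ζ₀ hF₀) (hba ζ₀ hF₀)
        have e1 : ε ≤ s - sInf (I ζ₀) := min_le_left _ _
        have e2 : ε ≤ sSup (I ζ₀) - s := min_le_right _ _
        exact ⟨by have := hx.1; linarith, by have := hx.2; linarith⟩
      have hder0 : HasDerivAt (lenAt (I ζ₀)) 1 s := hasDerivAt_lenAt (hmeas ζ₀) hfin₀ hε hIoo
      obtain ⟨L₁, L₂, hLsplit⟩ := List.append_of_mem hL
      have hL1' := hL1
      rw [hLsplit, List.pairwise_append] at hL1'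
      obtain ⟨hp1, hp2', hp12⟩ := hL1'
      rw [List.pairwise_cons] at hp2'
      obtain ⟨hp0, hp2⟩ := hp2'
      have hL1key : ∀ ζ ∈ L₁, key ζ₀ < key ζ := fun ζ h => hp12 ζ h ζ₀ (by simp)
      have hmem1 : ∀ ζ ∈ L₁, ζ ∈ supp := by
        intro ζ h; exact (hL2 ζ).mp (by rw [hLsplit]; exact List.mem_append_left _ h)
      have hmem2 : ∀ ζ ∈ L₂, ζ ∈ supp := by
        intro ζ h
        exact (hL2 ζ).mp (by rw [hLsplit]; exact List.mem_append_right _ (List.mem_cons_of_mem _ h))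
      -- facts about the factors
      have hL₁fact : ∀ ζ ∈ L₁, lenAt (I ζ) s = 0 ∧ s ∉ closure (I ζ) := by
        intro ζ hζ
        have hζs := hmem1 ζ hζ
        have hζF := hsuppF hζs
        have hkey := hL1key ζ hζ
        have hne : ζ ≠ ζ₀ := fun h => by rw [h] at hkey; exact lt_irrefl _ hkey
        have hneI : (I ζ).Nonempty := nonempty_of_measure_ne_zero (hvolne ζ hζs)
        have hlt : ∀ q ∈ I ζ, s < q := by
          rcases ordConn_all_lt (hconn ζ₀) (hconn ζ)
            (fun x hx hx' => hdisjf hne.symm x hx hx') with hc | hc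
          · exact fun q hq => hc s hsI q hq
          · exfalso
            obtain ⟨p, hp⟩ := hneI
            have hle : p ≤ key ζ₀ := le_csInf ⟨s, hsI⟩ (fun q hq => (hc p hp q hq).le)
            have hge : key ζ ≤ p := csInf_le (hbb ζ hζF) hp
            have : key ζ₀ < key ζ := hkey
            linarith
        have h0 : lenAt (I ζ) s = 0 := lenAt_eq_zero hlt
        have hclos : s ∉ closure (I ζ) :=
          hclosure hζF hs (fun h => absurd (hlt s h) (lt_irrefl s))
        exact ⟨h0, hclos⟩
      have hL₂fact : ∀ ζ ∈ L₂, s ∉ closure (I ζ) := by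
        intro ζ hζ
        have hζs := hmem2 ζ hζ
        have hkey := hp0 ζ hζ
        have hne : ζ ≠ ζ₀ := fun h => by rw [h] at hkey; exact lt_irrefl _ hkey
        exact hclosure (hsuppF hζs) hs (fun h => hdisjf hne s h hsI)
      set C := (L₂.map (fun ζ => f ζ s)).prod with hC
      have hfac1 : ∀ ζ ∈ L₁, (fun u => f ζ u) =ᶠ[nhds s] fun _ => (1 : 𝔸) := by
        intro ζ hζ
        obtain ⟨h0, hclos⟩ := hL₁fact ζ hζ
        filter_upwards [lenAt_eventually_const (hmeas ζ)
          (hfinvol ζ (hsuppF (hmem1 ζ hζ))) hclos] with u hu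
        show NormedSpace.exp (((lenAt (I ζ) u : ℝ) : ℂ) • A ζ) = 1
        rw [hu]
        show NormedSpace.exp (((lenAt (I ζ) s : ℝ) : ℂ) • A ζ) = 1
        rw [h0]
        simp [NormedSpace.exp_zero]
      have hfac2 : ∀ ζ ∈ L₂, (fun u => f ζ u) =ᶠ[nhds s] fun _ => f ζ s := by
        intro ζ hζ
        filter_upwards [lenAt_eventually_const (hmeas ζ)
          (hfinvol ζ (hsuppF (hmem2 ζ hζ))) (hL₂fact ζ hζ)] with u hu
        show NormedSpace.exp (((lenAt (I ζ) u : ℝ) : ℂ) • A ζ) = f ζ s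
        rw [hu]
      have hall1 := eventually_list (l := L₁) hfac1
      have hall2 := eventually_list (l := L₂) hfac2
      have hev : ψ =ᶠ[nhds s] fun u => f ζ₀ u * C := by
        filter_upwards [hall1, hall2] with u hu1 hu2
        show (L.map fun ζ => f ζ u).prod = f ζ₀ u * C
        rw [hLsplit, List.map_append, List.prod_append, List.map_cons, List.prod_cons]
        have e1 : (L₁.map fun ζ => f ζ u).prod = 1 := by
          apply List.prod_eq_one
          intro x hx
          obtain ⟨ζ, hζ, rfl⟩ := List.mem_map.mp hx
          exact hu1 ζ hζ
        have e2 : L₂.map (fun ζ => f ζ u) = L₂.map (fun ζ => f ζ s) :=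
          List.map_congr_left hu2
        rw [e1, e2, one_mul, hC]
      have hexp : HasDerivAt (fun c : ℂ => NormedSpace.exp (c • A ζ₀))
          (A ζ₀ * NormedSpace.exp (((lenAt (I ζ₀) s : ℝ) : ℂ) • A ζ₀))
          ((lenAt (I ζ₀) s : ℝ) : ℂ) := hasDerivAt_exp_smul_const' (A ζ₀) _
      have hcast : HasDerivAt (fun u : ℝ => ((lenAt (I ζ₀) u : ℝ) : ℂ)) (((1:ℝ) : ℂ)) s :=
        hder0.ofReal_comp
      have hcomp : HasDerivAt (fun u => f ζ₀ u) (A ζ₀ * f ζ₀ s) s := by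
        have := HasDerivAt.scomp (𝕜 := ℝ) (h := fun u : ℝ => ((lenAt (I ζ₀) u : ℝ) : ℂ)) s hexp hcast
        simpa [Function.comp_def, hfdef] using this
      have hmul : HasDerivAt (fun u => f ζ₀ u * C) ((A ζ₀ * f ζ₀ s) * C) s :=
        hcomp.mul_const C
      have final : HasDerivAt ψ ((A ζ₀ * f ζ₀ s) * C) s := hmul.congr_of_eventuallyEq hev
      have hψs : ψ s = f ζ₀ s * C := hev.self_of_nhds
      rw [show A (z s) * ψ s = (A ζ₀ * f ζ₀ s) * C by rw [hψs, mul_assoc]]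
      exact final
    · -- trivial case
      set ζ₀ := z s with hζ₀
      have hA0 : A ζ₀ = 0 := by
        by_contra hA
        have hF₀ : ζ₀ ∈ F := hsupp s hA
        have hnotsupp : ζ₀ ∉ supp := fun h => hL ((hL2 ζ₀).mpr h)
        have hvol0 : volume (I ζ₀) = 0 := by
          by_contra h0
          exact hnotsupp ⟨hF₀, ENNReal.toReal_pos h0 (hfinvol ζ₀ hF₀)⟩
        have heq := eq_sInf_of_null (hconn ζ₀) (hbb ζ₀ hF₀) (hba ζ₀ hF₀) (hself s) hvol0
        exact hs (Set.mem_biUnion hF₀ (by simp [heq]; exact Or.inl rfl))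
      have hfac : ∀ ζ ∈ L, (fun u => f ζ u) =ᶠ[nhds s] fun _ => f ζ s := by
        intro ζ hζ
        have hζF := hLF ζ hζ
        have hne : ζ ≠ ζ₀ := fun h => hL (h ▸ hζ)
        have hsnot : s ∉ I ζ := fun h => hdisjf hne s h (hself s)
        filter_upwards [lenAt_eventually_const (hmeas ζ) (hfinvol ζ hζF)
          (hclosure hζF hs hsnot)] with u hu
        show NormedSpace.exp (((lenAt (I ζ) u : ℝ) : ℂ) • A ζ) = f ζ s
        rw [hu]
      have hev : ψ =ᶠ[nhds s] fun _ => ψ s := by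
        filter_upwards [eventually_list (l := L) hfac] with u hu
        show (L.map fun ζ => f ζ u).prod = ψ s
        rw [List.map_congr_left hu]
      have hd : HasDerivAt ψ 0 s := (hasDerivAt_const s (ψ s)).congr_of_eventuallyEq hev
      rw [show A (z s) * ψ s = 0 by rw [← hζ₀, hA0, zero_mul]]
      exact hd
  · -- s ≤ -R
    intro s hsle
    apply List.prod_eq_one
    intro x hx
    obtain ⟨ζ, hζ, rfl⟩ := List.mem_map.mp hx
    have h0 : lenAt (I ζ) s = 0 :=
      lenAt_eq_zero (fun x hxI => lt_of_le_of_lt hsle ((hbdd ζ (hLF ζ hζ)) hxI).1)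
    show NormedSpace.exp (((lenAt (I ζ) s : ℝ) : ℂ) • A ζ) = 1
    rw [h0]; simp [NormedSpace.exp_zero]
  · -- s ≥ R
    intro s hsge
    rw [oprodBy_eq _ key supp L hL1 hL2]
    show (L.map fun ζ => f ζ s).prod = _
    congr 1
    apply List.map_congr_left
    intro ζ hζ
    have hsub : I ζ ⊆ Iic s := fun x hx => ((hbdd ζ (hLF ζ hζ)) hx).2.le.trans hsge
    show NormedSpace.exp (((lenAt (I ζ) s : ℝ) : ℂ) • A ζ) = _
    rw [lenAt_eq_tot hsub]

theorem euclid_coord_le {d : ℕ} (x : EuclideanSpace ℝ (Fin d)) (i : Fin d) : |x i| ≤ ‖x‖ := by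
  rw [EuclideanSpace.norm_eq, show |x i| = Real.sqrt (‖x i‖ ^ 2) by
    rw [Real.sqrt_sq_eq_abs, Real.norm_eq_abs, abs_abs]]
  exact Real.sqrt_le_sqrt (Finset.single_le_sum (f := fun j => ‖x j‖ ^ 2)
    (fun j _ => sq_nonneg _) (Finset.mem_univ i))

theorem euclid_norm_le {d : ℕ} (x : EuclideanSpace ℝ (Fin d)) (h : ∀ i, |x i| ≤ 1) :
    ‖x‖ ≤ Real.sqrt d := by
  rw [EuclideanSpace.norm_eq]
  apply Real.sqrt_le_sqrt
  calc ∑ i, ‖x i‖ ^ 2 ≤ ∑ _i : Fin d, (1 : ℝ) := by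
        refine Finset.sum_le_sum fun i _ => ?_
        rw [Real.norm_eq_abs]
        nlinarith [h i, abs_nonneg (x i)]
    _ = d := by simp

theorem round_mono' : Monotone (round : ℝ → ℤ) := by
  intro a b h
  rw [round_eq, round_eq]
  exact Int.floor_mono (by linarith)


/-- for the piecewise constant function f with value f^dis(ζ) on the unit
cube U_ζ (f^dis supported in B_r ∩ ℤ^d), along any oriented line the solution ψ of
dψ/ds = f(x₀ + sθ)ψ with ψ = I near −∞ exists and equals, for large s, the ordered
product of exp(ℓ_ζ(γ) f^dis(ζ)) over the cubes U_ζ, ζ ∈ B_r ∩ ℤ^d, met by the line,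
the cube met last contributing the leftmost factor. -/
theorem stmt13 (d n : ℕ) (hd : 1 ≤ d) (hn : 1 ≤ n) (r : ℝ) (hr : 0 < r)
    (fdis : (Fin d → ℤ) → Matrix (Fin n) (Fin n) ℂ)
    (hfdis : ∀ z : Fin d → ℤ, ¬ ‖emb z‖ ≤ r → fdis z = 0)
    (f : EuclideanSpace ℝ (Fin d) → Matrix (Fin n) (Fin n) ℂ)
    (hf : ∀ x, f x = fdis fun i => round (x i))
    (x₀ θ : EuclideanSpace ℝ (Fin d)) (hθ : ‖θ‖ = 1) :
    ∃ R : ℝ, 0 < R ∧ ∃ ψ : ℝ → Matrix (Fin n) (Fin n) ℂ,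
      Continuous ψ ∧
      (∃ E : Set ℝ, E.Finite ∧ ∀ s ∉ E, ∀ i j,
        HasDerivAt (fun u => ψ u i j) ((f (x₀ + s • θ) * ψ s) i j) s) ∧
      (∀ s ≤ -R, ψ s = 1) ∧
      (∀ s ≥ R, ψ s =
        oprodBy (fun ζ => NormedSpace.exp ((lenIn x₀ θ ζ : ℂ) • fdis ζ))
          (entryT x₀ θ)
          {ζ : Fin d → ℤ | ‖emb ζ‖ ≤ r ∧ 0 < lenIn x₀ θ ζ}) := by
  classical
  set z : ℝ → (Fin d → ℤ) := fun s i => round (x₀ i + s * θ i) with hz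
  set F : Set (Fin d → ℤ) := {ζ | ‖emb ζ‖ ≤ r} with hFdef
  have hFfin : F.Finite := by
    apply Set.Finite.subset (Set.Finite.pi (fun i : Fin d => Set.finite_Icc (-⌈r⌉) ⌈r⌉))
    intro ζ hζ
    rw [Set.mem_pi]
    intro i _
    have h1 : |(ζ i : ℝ)| ≤ r := le_trans (by simpa [emb] using euclid_coord_le (emb ζ) i) hζ
    have h2 : |(ζ i : ℝ)| ≤ (⌈r⌉ : ℝ) := h1.trans (Int.le_ceil r)
    have h3 : |ζ i| ≤ ⌈r⌉ := by exact_mod_cast h2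
    exact Set.mem_Icc.mpr (abs_le.mp h3)
  have hconn : ∀ ζ : Fin d → ℤ, Set.OrdConnected (z ⁻¹' {ζ}) := by
    intro ζ
    constructor
    intro s₁ h₁ s₂ h₂ s hs
    have h₁' : z s₁ = ζ := h₁
    have h₂' : z s₂ = ζ := h₂
    show z s = ζ
    funext i
    have e₁ : round (x₀ i + s₁ * θ i) = ζ i := congrFun h₁' i
    have e₂ : round (x₀ i + s₂ * θ i) = ζ i := congrFun h₂' i
    show round (x₀ i + s * θ i) = ζ i
    rcases le_total 0 (θ i) with hθi | hθi
    · have l1 : x₀ i + s₁ * θ i ≤ x₀ i + s * θ i := by nlinarith [hs.1]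
      have l2 : x₀ i + s * θ i ≤ x₀ i + s₂ * θ i := by nlinarith [hs.2]
      have a1 := round_mono' l1
      have a2 := round_mono' l2
      omega
    · have l1 : x₀ i + s₂ * θ i ≤ x₀ i + s * θ i := by nlinarith [hs.2]
      have l2 : x₀ i + s * θ i ≤ x₀ i + s₁ * θ i := by nlinarith [hs.1]
      have a1 := round_mono' l1
      have a2 := round_mono' l2
      omega
  have hsupp : ∀ s, fdis (z s) ≠ 0 → z s ∈ F := by
    intro s hA
    by_contra h
    exact hA (hfdis _ h)
  set R : ℝ := ‖x₀‖ + r + Real.sqrt d + 1 with hR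
  have hRpos : 0 < R := by
    have h1 : (0:ℝ) ≤ ‖x₀‖ := norm_nonneg _
    have h2 := Real.sqrt_nonneg (d : ℝ)
    rw [hR]; linarith
  have hbdd : ∀ ζ ∈ F, z ⁻¹' {ζ} ⊆ Set.Ioo (-R) R := by
    intro ζ hζ s hsmem
    have hzs : z s = ζ := hsmem
    have hrd : ∀ i, round (x₀ i + s * θ i) = ζ i := fun i => congrFun hzs i
    have hcoord : ∀ i, |(x₀ + s • θ - emb ζ) i| ≤ 1 := by
      intro i
      have happ : (x₀ + s • θ - emb ζ) i = (x₀ i + s * θ i) - (ζ i : ℝ) := by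
        simp [emb, PiLp.sub_apply, PiLp.add_apply, PiLp.smul_apply, smul_eq_mul]
      rw [happ, ← hrd i]
      exact (abs_sub_round _).trans (by norm_num)
    have h1 : ‖x₀ + s • θ - emb ζ‖ ≤ Real.sqrt d := euclid_norm_le _ hcoord
    have h2 : ‖x₀ + s • θ‖ ≤ r + Real.sqrt d := by
      have h3 : emb ζ + (x₀ + s • θ - emb ζ) = x₀ + s • θ := by abel
      calc ‖x₀ + s • θ‖ = ‖emb ζ + (x₀ + s • θ - emb ζ)‖ := by rw [h3]
        _ ≤ ‖emb ζ‖ + ‖x₀ + s • θ - emb ζ‖ := norm_add_le _ _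
        _ ≤ r + Real.sqrt d := add_le_add hζ h1
    have h4 : |s| ≤ ‖x₀ + s • θ‖ + ‖x₀‖ := by
      have h5 : ‖s • θ‖ = |s| := by rw [norm_smul, hθ, Real.norm_eq_abs, mul_one]
      have h6 : (x₀ + s • θ) - x₀ = s • θ := by abel
      calc |s| = ‖(x₀ + s • θ) - x₀‖ := by rw [h6, h5]
        _ ≤ ‖x₀ + s • θ‖ + ‖x₀‖ := norm_sub_le _ _
    have habs : |s| < R := by
      rw [hR]
      have := Real.sqrt_nonneg (d : ℝ)
      linarith
    exact Set.mem_Ioo.mpr (abs_lt.mp habs)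
  letI : SeminormedRing (Matrix (Fin n) (Fin n) ℂ) := Matrix.linftyOpSemiNormedRing
  letI : NormedRing (Matrix (Fin n) (Fin n) ℂ) := Matrix.linftyOpNormedRing
  letI : NormedAlgebra ℂ (Matrix (Fin n) (Fin n) ℂ) := Matrix.linftyOpNormedAlgebra
  obtain ⟨ψ, hcont, ⟨E, hEfin, hderiv⟩, hone, hprod⟩ :=
    aux_main (𝔸 := Matrix (Fin n) (Fin n) ℂ) fdis z F hFfin hconn R hsupp hbdd
  have hsetζ : ∀ ζ : Fin d → ℤ,
      {u : ℝ | ∀ i, round (x₀ i + u * θ i) = ζ i} = z ⁻¹' {ζ} := by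
    intro ζ; ext u
    simp only [Set.mem_setOf_eq, Set.mem_preimage, Set.mem_singleton_iff, funext_iff]
    exact Iff.rfl
  have hlen : lenIn x₀ θ = fun ζ => (MeasureTheory.volume (z ⁻¹' {ζ})).toReal := by
    funext ζ; rw [lenIn, hsetζ]
  have hentry : entryT x₀ θ = fun ζ => sInf (z ⁻¹' {ζ}) := by
    funext ζ; rw [entryT, hsetζ]
  have hfz : ∀ s : ℝ, f (x₀ + s • θ) = fdis (z s) := by
    intro s; rw [hf]; rfl
  refine ⟨R, hRpos, ψ, hcont, ⟨E, hEfin, ?_⟩, hone, ?_⟩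
  · intro s hs i j
    have hd := hderiv s hs
    let eLM : Matrix (Fin n) (Fin n) ℂ →ₗ[ℂ] ℂ :=
      { toFun := fun m => m i j, map_add' := fun _ _ => rfl, map_smul' := fun _ _ => rfl }
    let eCLM : Matrix (Fin n) (Fin n) ℂ →L[ℂ] ℂ := ⟨eLM, eLM.continuous_of_finiteDimensional⟩
    have hres := (eCLM.restrictScalars ℝ).hasFDerivAt.comp_hasDerivAt s hd
    rw [hfz s]
    exact hres
  · intro s hs
    rw [hlen, hentry]
    exact hprod s hs
end
end
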